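/- Let M be the Hardy–Littlewood maximal operator and δ ∈ (0,1). Then for every locally integrable f and every x ∈ ℝⁿ, M_δ(Mf)(x) ≤ C(n,δ) Mf(x), where M_δ g = (M(|g|^δ))^{1/δ}. -/

import Mathlib

open MeasureTheory Set
open scoped ENNReal

/-- The (uncentered, over cubes) maximal operator for an `ℝ≥0∞`-valued function:
`M g(x) = sup_{Q ∋ x} |Q|⁻¹ ∫_Q g`, where cubes are closed sup-metric balls. -/
noncomputable def cubeMax (n : ℕ) (g : (Fin n → ℝ) → ℝ≥0∞) (x : Fin n → ℝ) : ℝ≥0∞ :=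
  ⨆ (z : Fin n → ℝ) (r : ℝ) (_ : 0 < r) (_ : x ∈ Metric.closedBall z r),
    (volume (Metric.closedBall z r))⁻¹ * ∫⁻ y in Metric.closedBall z r, g y

section CR
variable {n : ℕ}

lemma vol_cball (z : Fin n → ℝ) {r : ℝ} (hr : 0 ≤ r) :
    volume (Metric.closedBall z r) = ENNReal.ofReal ((2*r)^n) := by
  rw [Real.volume_pi_closedBall z hr, Fintype.card_fin]

lemma vol_cball_ne_zero (z : Fin n → ℝ) {r : ℝ} (hr : 0 < r) :
    volume (Metric.closedBall z r) ≠ 0 := by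
  rw [vol_cball z hr.le]
  simp [ENNReal.ofReal_eq_zero, not_le, pow_pos, hr]

lemma vol_cball_ne_top (z : Fin n → ℝ) {r : ℝ} (hr : 0 ≤ r) :
    volume (Metric.closedBall z r) ≠ ⊤ := by
  rw [vol_cball z hr]; exact ENNReal.ofReal_ne_top

lemma vol_cball_scale (z : Fin n → ℝ) {k r : ℝ} (hk : 0 ≤ k) (hr : 0 ≤ r) :
    volume (Metric.closedBall z (k*r)) =
      ENNReal.ofReal (k^n) * volume (Metric.closedBall z r) := by
  rw [vol_cball z (mul_nonneg hk hr), vol_cball z hr,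
    ← ENNReal.ofReal_mul (by positivity)]
  ring_nf

lemma avg_le_cubeMax (g : (Fin n → ℝ) → ℝ≥0∞) {z x : Fin n → ℝ} {r : ℝ}
    (hr : 0 < r) (hx : x ∈ Metric.closedBall z r) :
    (volume (Metric.closedBall z r))⁻¹ * ∫⁻ y in Metric.closedBall z r, g y
      ≤ cubeMax n g x :=
  le_iSup_of_le z <| le_iSup_of_le r <| le_iSup_of_le hr <| le_iSup_of_le hx le_rfl

lemma isOpen_cubeMax_gt (g : (Fin n → ℝ) → ℝ≥0∞) (c : ℝ≥0∞) :
    IsOpen {y | c < cubeMax n g y} := by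
  rw [Metric.isOpen_iff]
  rintro y hy
  simp only [mem_setOf_eq, cubeMax, lt_iSup_iff] at hy
  obtain ⟨z, r, hr, hyB, hlt⟩ := hy
  set I := ∫⁻ w in Metric.closedBall z r, g w with hI
  -- find ε > 0 such that the average over the enlarged ball still exceeds c
  have hc_top : c ≠ ⊤ := hlt.ne_top
  obtain ⟨ε, hε, hkey⟩ :
      ∃ ε : ℝ, 0 < ε ∧ c < (volume (Metric.closedBall z (r+ε)))⁻¹ * I := by
    rcases eq_or_ne c 0 with rfl | hc0
    · refine ⟨1, one_pos, ?_⟩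
      have hI0 : I ≠ 0 := by
        rintro h
        rw [h, mul_zero] at hlt
        exact absurd hlt (lt_irrefl _)
      exact ENNReal.mul_pos (by simp [vol_cball_ne_top z (by linarith : (0:ℝ) ≤ r+1)]) hI0
    rcases eq_or_ne I ⊤ with hItop | hIfin
    · refine ⟨1, one_pos, ?_⟩
      rw [hItop, ENNReal.mul_top (by simp [vol_cball_ne_top z (by linarith : (0:ℝ) ≤ r+1)])]
      exact hc_top.lt_top
    -- the finite case : pass to real numbers
    have hVr : volume (Metric.closedBall z r) = ENNReal.ofReal ((2*r)^n) := vol_cball z hr.le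
    have hmul : c * volume (Metric.closedBall z r) < I := by
      refine (ENNReal.lt_div_iff_mul_lt (Or.inl (vol_cball_ne_zero z hr))
        (Or.inl (vol_cball_ne_top z hr.le))).1 ?_
      rwa [ENNReal.div_eq_inv_mul]
    have hreal : c.toReal * (2*r)^n < I.toReal := by
      have := ENNReal.toReal_lt_toReal (by
        exact ENNReal.mul_ne_top hc_top (vol_cball_ne_top z hr.le)) hIfin |>.2 hmul
      rwa [ENNReal.toReal_mul, hVr, ENNReal.toReal_ofReal (by positivity)] at this
    have hcont : Filter.Tendsto (fun ε : ℝ => c.toReal * (2*(r+ε))^n)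
        (nhds 0) (nhds (c.toReal * (2*r)^n)) := by
      have : Continuous (fun ε : ℝ => c.toReal * (2*(r+ε))^n) := by continuity
      simpa using this.tendsto 0
    have hev : ∀ᶠ ε in nhdsWithin (0:ℝ) (Set.Ioi 0),
        c.toReal * (2*(r+ε))^n < I.toReal ∧ 0 < ε :=
      ((hcont.eventually_lt_const hreal).filter_mono nhdsWithin_le_nhds).and
        eventually_mem_nhdsWithin
    obtain ⟨ε, h1, h2⟩ := hev.exists
    refine ⟨ε, h2, ?_⟩
    have hVε : volume (Metric.closedBall z (r+ε)) = ENNReal.ofReal ((2*(r+ε))^n) :=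
      vol_cball z (by linarith)
    have hmul' : c * volume (Metric.closedBall z (r+ε)) < I := by
      rw [hVε, ← ENNReal.ofReal_toReal hc_top, ← ENNReal.ofReal_mul ENNReal.toReal_nonneg,
        ← ENNReal.ofReal_toReal hIfin]
      exact ENNReal.ofReal_lt_ofReal_iff_of_nonneg (by positivity) |>.2 h1
    rw [← ENNReal.div_eq_inv_mul]
    exact (ENNReal.lt_div_iff_mul_lt (Or.inl (vol_cball_ne_zero z (by linarith)))
      (Or.inl (vol_cball_ne_top z (by linarith)))).2 hmul'
  refine ⟨ε, hε, fun y' hy' => ?_⟩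
  have hy'B : y' ∈ Metric.closedBall z (r + ε) := by
    rw [Metric.mem_closedBall] at *
    calc dist y' z ≤ dist y' y + dist y z := dist_triangle _ _ _
      _ ≤ ε + r := by
          have h1 := (Metric.mem_ball.mp hy').le
          have h2 := Metric.mem_closedBall.mp hyB
          exact add_le_add h1 h2
      _ = r + ε := by ring
  refine lt_of_lt_of_le hkey (le_trans ?_ (avg_le_cubeMax g (by linarith) hy'B))
  gcongr
  exact lintegral_mono_set (Metric.closedBall_subset_closedBall (by linarith))

lemma measurable_cubeMax (g : (Fin n → ℝ) → ℝ≥0∞) : Measurable (cubeMax n g) := by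
  have : LowerSemicontinuous (cubeMax n g) := by
    rw [lowerSemicontinuous_iff_isOpen_preimage]
    exact fun c => isOpen_cubeMax_gt g c
  exact this.measurable

lemma weak_type (g : (Fin n → ℝ) → ℝ≥0∞) {lam : ℝ≥0∞} (hlam : lam ≠ 0) :
    volume {y | lam < cubeMax n g y}
      ≤ ENNReal.ofReal (5^n) * lam⁻¹ * ∫⁻ y, g y := by
  set S := {y | lam < cubeMax n g y} with hS
  set T := ∫⁻ y, g y with hT
  rcases eq_or_ne lam ⊤ with rfl | hlamtop
  · have : S = ∅ := by
      refine eq_empty_iff_forall_notMem.2 fun y hy => ?_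
      rw [hS, mem_setOf_eq] at hy
      exact not_top_lt hy
    simp [this]
  rcases eq_or_ne T ⊤ with hTtop | hTfin
  · rw [hTtop, ENNReal.mul_top (by
      refine mul_ne_zero ?_ (ENNReal.inv_ne_zero.2 hlamtop)
      simp [ENNReal.ofReal_eq_zero, not_le])]
    exact le_top
  have hch : ∀ y : S, ∃ z, ∃ r, 0 < r ∧ (y : Fin n → ℝ) ∈ Metric.closedBall z r ∧
      lam * volume (Metric.closedBall z r) < ∫⁻ w in Metric.closedBall z r, g w := by
    rintro ⟨y, hy⟩
    rw [hS, mem_setOf_eq, cubeMax] at hy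
    simp only [lt_iSup_iff] at hy
    obtain ⟨z, r, hr, hyB, hlt⟩ := hy
    refine ⟨z, r, hr, hyB, ?_⟩
    refine (ENNReal.lt_div_iff_mul_lt (Or.inl (vol_cball_ne_zero z hr))
      (Or.inl (vol_cball_ne_top z hr.le))).1 ?_
    rwa [ENNReal.div_eq_inv_mul]
  choose ctr rad hrpos hmem hbig using hch
  have hinv0 : lam⁻¹ ≠ 0 := ENNReal.inv_ne_zero.2 hlamtop
  have hinvtop : lam⁻¹ ≠ ⊤ := ENNReal.inv_ne_top.2 hlam
  have hIb : ∀ y : S, ∫⁻ w in Metric.closedBall (ctr y) (rad y), g w ≤ T :=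
    fun y => setLIntegral_le_lintegral _ _
  have hvol : ∀ y : S, volume (Metric.closedBall (ctr y) (rad y))
      ≤ lam⁻¹ * ∫⁻ w in Metric.closedBall (ctr y) (rad y), g w := by
    intro y
    calc volume (Metric.closedBall (ctr y) (rad y))
        = lam⁻¹ * (lam * volume (Metric.closedBall (ctr y) (rad y))) := by
          rw [← mul_assoc, ENNReal.inv_mul_cancel hlam hlamtop, one_mul]
      _ ≤ _ := mul_le_mul_right (hbig y).le _
  rcases Nat.eq_zero_or_pos n with hn | hn
  · subst hn
    rcases eq_empty_or_nonempty S with hSe | ⟨y, hy⟩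
    · simp [hSe]
    have hvol1 : ∀ (z : Fin 0 → ℝ) (r : ℝ), 0 < r → volume (Metric.closedBall z r) = 1 := by
      intro z r hr; rw [vol_cball z hr.le]; norm_num
    have hlamT : lam ≤ T := by
      have h := hbig ⟨y, hy⟩
      rw [hvol1 _ _ (hrpos ⟨y, hy⟩), mul_one] at h
      exact h.le.trans (hIb ⟨y, hy⟩)
    have hSuniv : volume S ≤ 1 := by
      have h2 : volume (univ : Set (Fin 0 → ℝ)) = 1 := by
        have h3 : (univ : Set (Fin 0 → ℝ)) = Metric.closedBall y 1 := by
          refine (eq_univ_of_forall fun w => ?_).symm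
          rw [Subsingleton.elim w y]
          exact Metric.mem_closedBall_self one_pos.le
        rw [h3, hvol1 _ _ one_pos]
      exact le_trans (measure_mono (subset_univ _)) h2.le
    refine hSuniv.trans ?_
    calc (1:ℝ≥0∞) = lam⁻¹ * lam := (ENNReal.inv_mul_cancel hlam hlamtop).symm
      _ ≤ lam⁻¹ * T := mul_le_mul_right hlamT _
      _ = ENNReal.ofReal (5^0) * lam⁻¹ * T := by norm_num
  -- n ≥ 1 : radius bound
  have hrb : ∀ y : S, rad y ≤ max 1 ((lam⁻¹ * T).toReal) / 2 := by
    intro y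
    have h1 : volume (Metric.closedBall (ctr y) (rad y)) < lam⁻¹ * T := by
      calc volume (Metric.closedBall (ctr y) (rad y))
          = lam⁻¹ * (lam * volume (Metric.closedBall (ctr y) (rad y))) := by
            rw [← mul_assoc, ENNReal.inv_mul_cancel hlam hlamtop, one_mul]
        _ < lam⁻¹ * T := by
            rw [ENNReal.mul_lt_mul_iff_right hinv0 hinvtop]
            exact lt_of_lt_of_le (hbig y) (hIb y)
    rw [vol_cball _ (hrpos y).le] at h1
    have h2 : (2 * rad y)^n < (lam⁻¹ * T).toReal := by
      have h3 := (ENNReal.toReal_lt_toReal ENNReal.ofReal_ne_top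
        (ENNReal.mul_ne_top hinvtop hTfin)).2 h1
      rwa [ENNReal.toReal_ofReal (by have := hrpos y; positivity)] at h3
    have h4 : 2 * rad y ≤ max 1 ((lam⁻¹ * T).toReal) := by
      rcases le_or_gt (2 * rad y) 1 with h | h
      · exact h.trans (le_max_left _ _)
      · refine le_trans ?_ (le_max_right _ _)
        exact (le_self_pow₀ h.le hn.ne').trans h2.le
    linarith
  obtain ⟨u, -, u_disj, u_cov⟩ :=
    Vitali.exists_disjoint_subfamily_covering_enlargement_closedBall
      (Set.univ : Set S) ctr rad _ (fun y _ => hrb y) 5 (by norm_num)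
  have u_count : u.Countable := by
    refine u_disj.countable_of_nonempty_interior fun y _ => ?_
    exact (Metric.nonempty_ball.2 (hrpos y)).mono Metric.ball_subset_interior_closedBall
  have hS_sub : S ⊆ ⋃ b ∈ u, Metric.closedBall (ctr b) (5 * rad b) := by
    intro y hy
    obtain ⟨b, hb, hsub⟩ := u_cov ⟨y, hy⟩ (mem_univ _)
    exact mem_biUnion hb (hsub (hmem ⟨y, hy⟩))
  have hsum : ∑' b : u, ∫⁻ w in Metric.closedBall (ctr b) (rad b), g w ≤ T := by
    set μ' := volume.withDensity g with hμ'
    have happ : ∀ b : S, (∫⁻ w in Metric.closedBall (ctr b) (rad b), g w)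
        = μ' (Metric.closedBall (ctr b) (rad b)) :=
      fun b => (withDensity_apply g Metric.isClosed_closedBall.measurableSet).symm
    calc ∑' b : u, ∫⁻ w in Metric.closedBall (ctr b) (rad b), g w
        = ∑' b : u, μ' (Metric.closedBall (ctr b) (rad b)) := by
          exact tsum_congr fun b => happ b
      _ = μ' (⋃ b ∈ u, Metric.closedBall (ctr b) (rad b)) :=
          (measure_biUnion u_count u_disj
            (fun b _ => Metric.isClosed_closedBall.measurableSet)).symm
      _ ≤ μ' univ := measure_mono (subset_univ _)
      _ = T := by rw [hμ', withDensity_apply g MeasurableSet.univ, Measure.restrict_univ]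
  calc volume S
      ≤ volume (⋃ b ∈ u, Metric.closedBall (ctr b) (5 * rad b)) := measure_mono hS_sub
    _ ≤ ∑' b : u, volume (Metric.closedBall (ctr b) (5 * rad b)) :=
        measure_biUnion_le _ u_count _
    _ ≤ ∑' b : u, ENNReal.ofReal (5^n) *
          (lam⁻¹ * ∫⁻ w in Metric.closedBall (ctr b) (rad b), g w) := by
        refine ENNReal.tsum_le_tsum fun b => ?_
        rw [vol_cball_scale _ (by norm_num) (hrpos b).le]
        exact mul_le_mul_right (hvol b) _
    _ = ENNReal.ofReal (5^n) * lam⁻¹ *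
          ∑' b : u, ∫⁻ w in Metric.closedBall (ctr b) (rad b), g w := by
        rw [ENNReal.tsum_mul_left, ENNReal.tsum_mul_left, mul_assoc]
    _ ≤ ENNReal.ofReal (5^n) * lam⁻¹ * T := mul_le_mul_right hsum _

end CR


lemma cubeMax_le_add (g : (Fin n → ℝ) → ℝ≥0∞) (hg : AEMeasurable g volume)
    (s : Set (Fin n → ℝ)) (hs : MeasurableSet s) (y : Fin n → ℝ) :
    cubeMax n g y ≤ cubeMax n (s.indicator g) y + cubeMax n (sᶜ.indicator g) y := by
  refine iSup_le fun z => iSup_le fun r => iSup_le fun hr => iSup_le fun hy => ?_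
  have heq : (∫⁻ w in Metric.closedBall z r, g w)
      = (∫⁻ w in Metric.closedBall z r, s.indicator g w)
        + ∫⁻ w in Metric.closedBall z r, sᶜ.indicator g w :=
    calc (∫⁻ w in Metric.closedBall z r, g w)
        = ∫⁻ w in Metric.closedBall z r, (s.indicator g w + sᶜ.indicator g w) :=
          lintegral_congr fun w => (Set.indicator_self_add_compl_apply s g w).symm
      _ = _ := lintegral_add_left' ((hg.indicator hs).restrict) _
  rw [heq, mul_add]
  exact add_le_add (avg_le_cubeMax _ hr hy) (avg_le_cubeMax _ hr hy)

lemma key_bound (δ : ℝ) (hδ : δ ∈ Set.Ioo (0 : ℝ) 1) :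
    ∃ C₂ : ℝ≥0∞, C₂ ≠ ⊤ ∧
      ∀ g : (Fin n → ℝ) → ℝ≥0∞, AEMeasurable g volume → ∀ x : Fin n → ℝ,
        cubeMax n (fun y => (cubeMax n g y) ^ δ) x ≤ C₂ * (cubeMax n g x) ^ δ := by
  obtain ⟨hδ0, hδ1⟩ := hδ
  set q : ℝ≥0∞ := (2:ℝ≥0∞) ^ (δ - 1) with hq
  have hq1 : q < 1 := by
    have h2 : ((2:ℝ≥0∞)) ^ (δ - 1) < 2 ^ (0:ℝ) :=
      ENNReal.rpow_lt_rpow_of_exponent_lt (by norm_num) (by norm_num) (by linarith)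
    rwa [ENNReal.rpow_zero] at h2
  set Ksum : ℝ≥0∞ := (1 - q)⁻¹ with hKs
  have hKsfin : Ksum ≠ ⊤ := ENNReal.inv_ne_top.2 (tsub_pos_of_lt hq1).ne'
  set K₁ : ℝ≥0∞ := 1 + ENNReal.ofReal (5^n) * ENNReal.ofReal (2^n) *
      (2:ℝ≥0∞) ^ δ * Ksum with hK₁
  have hK₁fin : K₁ ≠ ⊤ := by
    refine ENNReal.add_ne_top.2 ⟨ENNReal.one_ne_top, ?_⟩
    exact ENNReal.mul_ne_top (ENNReal.mul_ne_top
      (ENNReal.mul_ne_top ENNReal.ofReal_ne_top ENNReal.ofReal_ne_top)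
      (ENNReal.rpow_ne_top_of_nonneg hδ0.le (by norm_num))) hKsfin
  refine ⟨K₁ + (ENNReal.ofReal (5^n)) ^ δ, ?_, ?_⟩
  · exact ENNReal.add_ne_top.2 ⟨hK₁fin,
      ENNReal.rpow_ne_top_of_nonneg hδ0.le ENNReal.ofReal_ne_top⟩
  intro g hg x
  set C₂ := K₁ + (ENNReal.ofReal (5^n)) ^ δ with hC₂
  have hC₂0 : C₂ ≠ 0 := by
    intro h
    rw [hC₂, add_eq_zero] at h
    rw [hK₁] at h
    simpa using h.1
  rcases eq_or_ne (cubeMax n g x) ⊤ with hMx | hMx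
  · rw [hMx, ENNReal.top_rpow_of_pos hδ0, ENNReal.mul_top hC₂0]
    exact le_top
  refine iSup_le fun z => iSup_le fun r => iSup_le fun hr => iSup_le fun hx => ?_
  show (volume (Metric.closedBall z r))⁻¹ *
      (∫⁻ y in Metric.closedBall z r, (cubeMax n g y) ^ δ) ≤ C₂ * (cubeMax n g x) ^ δ
  set Q := Metric.closedBall z r with hQ
  set Q2 := Metric.closedBall z (2*r) with hQ2
  have hr2 : 0 < 2*r := by linarith
  have hxQ2 : x ∈ Q2 := by
    rw [hQ2, Metric.mem_closedBall]
    have := Metric.mem_closedBall.mp hx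
    linarith
  set a : ℝ≥0∞ := (volume Q2)⁻¹ * ∫⁻ w in Q2, g w with ha
  have ha_le : a ≤ cubeMax n g x := avg_le_cubeMax g hr2 hxQ2
  have hafin : a ≠ ⊤ := (lt_of_le_of_lt ha_le (lt_top_iff_ne_top.2 hMx)).ne
  set f₁ := Q2.indicator g with hf₁
  set f₂ := Q2ᶜ.indicator g with hf₂
  have hQ2meas : MeasurableSet Q2 := Metric.isClosed_closedBall.measurableSet
  have hf₁int : ∫⁻ w, f₁ w = a * volume Q2 := by
    rw [hf₁, lintegral_indicator hQ2meas, ha, mul_comm, ← mul_assoc,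
      ENNReal.mul_inv_cancel (vol_cball_ne_zero z hr2) (vol_cball_ne_top z hr2.le), one_mul]
  have h5ne0 : ENNReal.ofReal ((5:ℝ)^n) ≠ 0 := by
    simp [ENNReal.ofReal_eq_zero, not_le]
  -- bound for the far part f₂
  have hf₂bound : ∀ y ∈ Q, cubeMax n f₂ y ≤ ENNReal.ofReal (5^n) * cubeMax n g x := by
    intro y hy
    refine iSup_le fun w => iSup_le fun s => iSup_le fun hs => iSup_le fun hyw => ?_
    rcases (Metric.closedBall w s ∩ Q2ᶜ).eq_empty_or_nonempty with hint | ⟨p, hp⟩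
    · have hsub : Metric.closedBall w s ⊆ Q2 := by
        intro v hv
        by_contra hvQ
        exact (Set.eq_empty_iff_forall_notMem.1 hint v) ⟨hv, hvQ⟩
      have hzero : ∫⁻ v in Metric.closedBall w s, f₂ v = 0 := by
        have hle : ∫⁻ v in Metric.closedBall w s, f₂ v ≤ ∫⁻ _ in Metric.closedBall w s, (0:ℝ≥0∞) := by
          refine setLIntegral_mono measurable_const fun v hv => ?_
          rw [hf₂, Set.indicator_of_notMem (by simpa using hsub hv)]
        simpa using hle
      rw [hzero, mul_zero]
      exact zero_le
    · obtain ⟨hpw, hpQ2⟩ := hp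
      rw [Set.mem_compl_iff, hQ2, Metric.mem_closedBall, not_le] at hpQ2
      have hdyw := Metric.mem_closedBall.mp hyw
      have hdyz := Metric.mem_closedBall.mp hy
      have hdpw := Metric.mem_closedBall.mp hpw
      have hdxz := Metric.mem_closedBall.mp hx
      have hrs : r < 2*s := by
        have h1 : dist p z ≤ dist p w + dist w y + dist y z := dist_triangle4 p w y z
        have h2 : dist w y = dist y w := dist_comm w y
        linarith
      have hs5 : 0 < 5*s := by linarith
      have hxw : x ∈ Metric.closedBall w (5*s) := by
        rw [Metric.mem_closedBall]
        have h1 : dist x w ≤ dist x z + dist z y + dist y w := dist_triangle4 x z y w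
        have h2 : dist z y = dist y z := dist_comm z y
        linarith
      have hIle : ∫⁻ v in Metric.closedBall w s, f₂ v
          ≤ ∫⁻ v in Metric.closedBall w (5*s), g v := by
        refine le_trans (lintegral_mono fun v => Set.indicator_le_self _ _ v) ?_
        exact lintegral_mono_set (Metric.closedBall_subset_closedBall (by linarith))
      have hinv : (volume (Metric.closedBall w s))⁻¹
          = ENNReal.ofReal (5^n) * (volume (Metric.closedBall w (5*s)))⁻¹ := by
        rw [vol_cball_scale w (by norm_num : (0:ℝ) ≤ 5) hs.le,
          ENNReal.mul_inv (Or.inl h5ne0) (Or.inl ENNReal.ofReal_ne_top), ← mul_assoc,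
          ENNReal.mul_inv_cancel h5ne0 ENNReal.ofReal_ne_top, one_mul]
      calc (volume (Metric.closedBall w s))⁻¹ * ∫⁻ v in Metric.closedBall w s, f₂ v
          ≤ (volume (Metric.closedBall w s))⁻¹ * ∫⁻ v in Metric.closedBall w (5*s), g v :=
            mul_le_mul_right hIle _
        _ = ENNReal.ofReal (5^n) * ((volume (Metric.closedBall w (5*s)))⁻¹ *
              ∫⁻ v in Metric.closedBall w (5*s), g v) := by rw [hinv, mul_assoc]
        _ ≤ ENNReal.ofReal (5^n) * cubeMax n g x :=
            mul_le_mul_right (avg_le_cubeMax g hs5 hxw) _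
  -- Kolmogorov-type bound for the near part f₁
  have hK : ∫⁻ y in Q, (cubeMax n f₁ y)^δ ≤ K₁ * a^δ * volume Q := by
    rcases eq_or_ne a 0 with ha0 | ha0
    · have hint0 : ∫⁻ w, f₁ w = 0 := by rw [hf₁int, ha0, zero_mul]
      have hMf₁ : ∀ y, cubeMax n f₁ y = 0 := by
        intro y
        refine le_antisymm (iSup_le fun w => iSup_le fun s => iSup_le fun hs =>
          iSup_le fun hyw => ?_) (zero_le)
        have h0 : ∫⁻ v in Metric.closedBall w s, f₁ v = 0 :=
          le_antisymm (le_trans (setLIntegral_le_lintegral _ _) hint0.le) (zero_le)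
        rw [h0, mul_zero]
      have hz : ∫⁻ y in Q, (cubeMax n f₁ y)^δ = 0 := by
        simp [hMf₁, ENNReal.zero_rpow_of_pos hδ0]
      rw [hz]
      exact zero_le
    set E : ℕ → Set (Fin n → ℝ) := fun k => {y | 2^k * a < cubeMax n f₁ y} with hE
    have hEmeas : ∀ k, MeasurableSet (E k) := fun k => (isOpen_cubeMax_gt f₁ _).measurableSet
    have h2ka : ∀ k : ℕ, ((2:ℝ≥0∞)^k * a ≠ 0) :=
      fun k => mul_ne_zero (pow_ne_zero k (by norm_num)) ha0
    have h2ka_top : ∀ k : ℕ, ((2:ℝ≥0∞)^k * a ≠ ⊤) :=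
      fun k => ENNReal.mul_ne_top (ENNReal.pow_ne_top (by norm_num)) hafin
    have hEvol : ∀ k, volume (E k)
        ≤ ENNReal.ofReal (5^n) * (((2:ℝ≥0∞)^k)⁻¹ * volume Q2) := by
      intro k
      have hw := weak_type f₁ (lam := 2^k * a) (h2ka k)
      rw [hf₁int] at hw
      refine hw.trans (le_of_eq ?_)
      rw [mul_assoc]
      congr 1
      rw [ENNReal.mul_inv (Or.inl (pow_ne_zero k (by norm_num)))
        (Or.inl (ENNReal.pow_ne_top (by norm_num))), mul_assoc, ← mul_assoc a⁻¹ a _,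
        ENNReal.inv_mul_cancel ha0 hafin, one_mul]
    have hpt : ∀ y, (cubeMax n f₁ y)^δ
        ≤ a^δ + ∑' k : ℕ, (E k).indicator (fun _ => ((2:ℝ≥0∞)^(k+1) * a)^δ) y := by
      intro y
      rcases le_or_gt (cubeMax n f₁ y) a with h | h
      · exact le_add_right (ENNReal.rpow_le_rpow h hδ0.le)
      rcases eq_or_ne (cubeMax n f₁ y) ⊤ with htop | hfin
      · have hmem : ∀ k : ℕ, y ∈ E k := by
          intro k
          show 2^k * a < cubeMax n f₁ y
          rw [htop]
          exact (h2ka_top k).lt_top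
        have haδ : a^δ ≠ 0 := (ENNReal.rpow_pos (pos_iff_ne_zero.2 ha0) hafin).ne'
        have hsum : (∑' k : ℕ, (E k).indicator (fun _ => ((2:ℝ≥0∞)^(k+1) * a)^δ) y) = ⊤ := by
          refine top_le_iff.1 ?_
          calc (⊤:ℝ≥0∞) = ∑' _ : ℕ, a^δ := (ENNReal.tsum_const_eq_top_of_ne_zero haδ).symm
            _ ≤ _ := by
              refine ENNReal.tsum_le_tsum fun k => ?_
              rw [Set.indicator_of_mem (hmem k)]
              refine ENNReal.rpow_le_rpow ?_ hδ0.le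
              have h1 : (1:ℝ≥0∞) ≤ 2^(k+1) := by exact_mod_cast Nat.one_le_two_pow
              calc a = 1 * a := (one_mul a).symm
                _ ≤ 2^(k+1) * a := mul_le_mul_left h1 a
        rw [hsum, add_top]
        exact le_top
      · have hex : ∃ k : ℕ, cubeMax n f₁ y ≤ 2^k * a := by
          obtain ⟨m, hm⟩ := ENNReal.exists_nat_gt (ENNReal.div_lt_top hfin ha0).ne
          refine ⟨m, ?_⟩
          have hcast : (m:ℝ≥0∞) ≤ 2^m := by exact_mod_cast (Nat.lt_two_pow_self (n := m)).le
          have hlt := (ENNReal.div_lt_iff (Or.inl ha0) (Or.inl hafin)).1 hm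
          exact hlt.le.trans (mul_le_mul_left hcast a)
        have hmne : Nat.find hex ≠ 0 := by
          intro h0
          have hm1 := Nat.find_spec hex
          rw [h0, pow_zero, one_mul] at hm1
          exact absurd hm1 (not_le.2 h)
        obtain ⟨m', hm'⟩ := Nat.exists_eq_succ_of_ne_zero hmne
        have hm1 : cubeMax n f₁ y ≤ 2^(m'+1) * a := by
          have hsp := Nat.find_spec hex
          rwa [hm'] at hsp
        have hym' : y ∈ E m' := by
          have h2 := Nat.find_min hex (by omega : m' < Nat.find hex)
          exact not_le.1 h2
        calc (cubeMax n f₁ y)^δ ≤ (((2:ℝ≥0∞)^(m'+1)) * a)^δ :=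
            ENNReal.rpow_le_rpow hm1 hδ0.le
          _ = (E m').indicator (fun _ => ((2:ℝ≥0∞)^(m'+1) * a)^δ) y := by
            rw [Set.indicator_of_mem hym']
          _ ≤ ∑' k : ℕ, (E k).indicator (fun _ => ((2:ℝ≥0∞)^(k+1) * a)^δ) y :=
            ENNReal.le_tsum m'
          _ ≤ _ := le_add_left le_rfl
    have hsum_int : ∫⁻ y in Q, (cubeMax n f₁ y)^δ
        ≤ a^δ * volume Q + ∑' k : ℕ, ((2:ℝ≥0∞)^(k+1) * a)^δ * volume (E k) := by
      calc ∫⁻ y in Q, (cubeMax n f₁ y)^δ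
          ≤ ∫⁻ y in Q, (a^δ + ∑' k : ℕ,
              (E k).indicator (fun _ => ((2:ℝ≥0∞)^(k+1) * a)^δ) y) := lintegral_mono hpt
        _ = a^δ * volume Q + ∫⁻ y in Q, ∑' k : ℕ,
              (E k).indicator (fun _ => ((2:ℝ≥0∞)^(k+1) * a)^δ) y := by
            rw [lintegral_add_left measurable_const, lintegral_const,
              Measure.restrict_apply_univ]
        _ ≤ _ := by
            refine add_le_add_right ?_ _
            rw [lintegral_tsum fun k =>
              (measurable_const.indicator (hEmeas k)).aemeasurable]
            refine ENNReal.tsum_le_tsum fun k => ?_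
            calc ∫⁻ y in Q, (E k).indicator (fun _ => ((2:ℝ≥0∞)^(k+1) * a)^δ) y
                ≤ ∫⁻ y, (E k).indicator (fun _ => ((2:ℝ≥0∞)^(k+1) * a)^δ) y :=
                  setLIntegral_le_lintegral _ _
              _ = _ := lintegral_indicator_const (hEmeas k) _
    have e4 : volume Q2 = ENNReal.ofReal (2^n) * volume Q :=
      vol_cball_scale z (by norm_num) hr.le
    have e3 : ∀ k : ℕ, ((2:ℝ≥0∞)^(k+1))^δ * ((2:ℝ≥0∞)^k)⁻¹ = (2:ℝ≥0∞)^δ * q^k := by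
      intro k
      rw [hq, ← ENNReal.rpow_natCast 2 (k+1), ← ENNReal.rpow_mul,
        ← ENNReal.rpow_natCast 2 k, ← ENNReal.rpow_neg,
        ← ENNReal.rpow_natCast ((2:ℝ≥0∞)^(δ-1 : ℝ)) k, ← ENNReal.rpow_mul,
        ← ENNReal.rpow_add _ _ (by norm_num) (by norm_num),
        ← ENNReal.rpow_add _ _ (by norm_num) (by norm_num)]
      congr 1
      push_cast
      ring
    have hterm : ∀ k : ℕ, ((2:ℝ≥0∞)^(k+1) * a)^δ *
          (ENNReal.ofReal (5^n) * (((2:ℝ≥0∞)^k)⁻¹ * volume Q2))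
        = (ENNReal.ofReal (5^n) * ENNReal.ofReal (2^n) * a^δ * volume Q) *
          (((2:ℝ≥0∞)^(k+1))^δ * ((2:ℝ≥0∞)^k)⁻¹) := by
      intro k
      rw [ENNReal.mul_rpow_of_ne_top (ENNReal.pow_ne_top (by norm_num)) hafin, e4]
      ring
    have htsum : ∑' k : ℕ, ((2:ℝ≥0∞)^(k+1) * a)^δ * volume (E k)
        ≤ (ENNReal.ofReal (5^n) * ENNReal.ofReal (2^n) * a^δ * volume Q) *
          ((2:ℝ≥0∞)^δ * Ksum) := by
      calc ∑' k : ℕ, ((2:ℝ≥0∞)^(k+1) * a)^δ * volume (E k)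
          ≤ ∑' k : ℕ, ((2:ℝ≥0∞)^(k+1) * a)^δ *
              (ENNReal.ofReal (5^n) * (((2:ℝ≥0∞)^k)⁻¹ * volume Q2)) :=
            ENNReal.tsum_le_tsum fun k => mul_le_mul_right (hEvol k) _
        _ = ∑' k : ℕ, (ENNReal.ofReal (5^n) * ENNReal.ofReal (2^n) * a^δ * volume Q) *
              ((2:ℝ≥0∞)^δ * q^k) := by
            refine tsum_congr fun k => ?_
            rw [hterm k, e3 k]
        _ = (ENNReal.ofReal (5^n) * ENNReal.ofReal (2^n) * a^δ * volume Q) *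
              ((2:ℝ≥0∞)^δ * ∑' k : ℕ, q^k) := by
            rw [ENNReal.tsum_mul_left, ENNReal.tsum_mul_left]
        _ = _ := by rw [hKs, ENNReal.tsum_geometric]
    calc ∫⁻ y in Q, (cubeMax n f₁ y)^δ
        ≤ a^δ * volume Q + ∑' k : ℕ, ((2:ℝ≥0∞)^(k+1) * a)^δ * volume (E k) := hsum_int
      _ ≤ a^δ * volume Q + (ENNReal.ofReal (5^n) * ENNReal.ofReal (2^n) * a^δ * volume Q) *
            ((2:ℝ≥0∞)^δ * Ksum) := add_le_add_right htsum _
      _ = K₁ * a^δ * volume Q := by rw [hK₁]; ring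
  -- assemble
  have hf₁meas : Measurable (fun y => (cubeMax n f₁ y)^δ) := (measurable_cubeMax f₁).pow_const δ
  have hf₂meas : Measurable (fun y => (cubeMax n f₂ y)^δ) := (measurable_cubeMax f₂).pow_const δ
  have hsplit : ∫⁻ y in Q, (cubeMax n g y)^δ
      ≤ K₁ * a^δ * volume Q + (ENNReal.ofReal (5^n) * cubeMax n g x)^δ * volume Q := by
    calc ∫⁻ y in Q, (cubeMax n g y)^δ
        ≤ ∫⁻ y in Q, ((cubeMax n f₁ y)^δ + (cubeMax n f₂ y)^δ) := by
          refine lintegral_mono fun y => ?_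
          calc (cubeMax n g y)^δ ≤ (cubeMax n f₁ y + cubeMax n f₂ y)^δ :=
              ENNReal.rpow_le_rpow (cubeMax_le_add g hg Q2 hQ2meas y) hδ0.le
            _ ≤ _ := ENNReal.rpow_add_le_add_rpow _ _ hδ0.le hδ1.le
      _ = (∫⁻ y in Q, (cubeMax n f₁ y)^δ) + ∫⁻ y in Q, (cubeMax n f₂ y)^δ :=
          lintegral_add_left hf₁meas _
      _ ≤ K₁ * a^δ * volume Q + (ENNReal.ofReal (5^n) * cubeMax n g x)^δ * volume Q := by
          refine add_le_add hK ?_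
          calc ∫⁻ y in Q, (cubeMax n f₂ y)^δ
              ≤ ∫⁻ _ in Q, (ENNReal.ofReal (5^n) * cubeMax n g x)^δ :=
                setLIntegral_mono measurable_const fun y hy =>
                  ENNReal.rpow_le_rpow (hf₂bound y hy) hδ0.le
            _ = _ := by rw [lintegral_const, Measure.restrict_apply_univ]
  calc (volume Q)⁻¹ * ∫⁻ y in Q, (cubeMax n g y)^δ
      ≤ (volume Q)⁻¹ * (K₁ * a^δ * volume Q +
          (ENNReal.ofReal (5^n) * cubeMax n g x)^δ * volume Q) := mul_le_mul_right hsplit _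
    _ = (K₁ * a^δ + (ENNReal.ofReal (5^n) * cubeMax n g x)^δ) *
          ((volume Q)⁻¹ * volume Q) := by ring
    _ = K₁ * a^δ + (ENNReal.ofReal (5^n) * cubeMax n g x)^δ := by
        rw [ENNReal.inv_mul_cancel (vol_cball_ne_zero z hr) (vol_cball_ne_top z hr.le), mul_one]
    _ ≤ K₁ * (cubeMax n g x)^δ + (ENNReal.ofReal (5^n))^δ * (cubeMax n g x)^δ := by
        refine add_le_add (mul_le_mul_right (ENNReal.rpow_le_rpow ha_le hδ0.le) _) ?_
        rw [ENNReal.mul_rpow_of_ne_top ENNReal.ofReal_ne_top hMx]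
    _ = C₂ * (cubeMax n g x)^δ := by rw [hC₂]; ring

/-- Coifman–Rochberg: for `δ ∈ (0,1)`,
`M_δ(Mf)(x) = (M((Mf)^δ))^{1/δ}(x) ≤ C(n,δ) Mf(x)` pointwise. -/
theorem stmt_14 (n : ℕ) (δ : ℝ) (hδ : δ ∈ Set.Ioo (0 : ℝ) 1) :
    ∃ C : ℝ, 0 < C ∧
      ∀ f : (Fin n → ℝ) → ℝ, LocallyIntegrable f volume →
      ∀ x : Fin n → ℝ,
        (cubeMax n
            (fun y => (cubeMax n (fun w => ENNReal.ofReal |f w|) y) ^ δ) x) ^ (1 / δ)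
          ≤ ENNReal.ofReal C * cubeMax n (fun w => ENNReal.ofReal |f w|) x := by
  obtain ⟨C₂, hC₂fin, hC₂⟩ := key_bound (n := n) δ hδ
  obtain ⟨hδ0, hδ1⟩ := hδ
  refine ⟨(C₂ ^ (1/δ)).toReal + 1, by positivity, fun f hf x => ?_⟩
  set g : (Fin n → ℝ) → ℝ≥0∞ := fun w => ENNReal.ofReal |f w| with hgdef
  have hg : AEMeasurable g volume := by
    have := hf.aestronglyMeasurable.norm.aemeasurable.ennreal_ofReal
    simpa [hgdef, Real.norm_eq_abs] using this
  have h1 : cubeMax n (fun y => (cubeMax n g y) ^ δ) x ≤ C₂ * (cubeMax n g x) ^ δ :=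
    hC₂ g hg x
  have h2 : (cubeMax n (fun y => (cubeMax n g y) ^ δ) x) ^ (1/δ)
      ≤ (C₂ * (cubeMax n g x) ^ δ) ^ (1/δ) :=
    ENNReal.rpow_le_rpow h1 (by positivity)
  refine h2.trans ?_
  rw [ENNReal.mul_rpow_of_nonneg _ _ (by positivity), ← ENNReal.rpow_mul,
    mul_one_div_cancel hδ0.ne', ENNReal.rpow_one]
  refine mul_le_mul_left ?_ _
  have hfin : C₂ ^ (1/δ) ≠ ⊤ := ENNReal.rpow_ne_top_of_nonneg (by positivity) hC₂fin
  calc C₂ ^ (1/δ) = ENNReal.ofReal ((C₂ ^ (1/δ)).toReal) := (ENNReal.ofReal_toReal hfin).symm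
    _ ≤ ENNReal.ofReal ((C₂ ^ (1/δ)).toReal + 1) := ENNReal.ofReal_le_ofReal (by linarith)
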